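/- For all integers n ≥ 0 and r ≥ 0, the generalized degenerate harmonic number satisfies H_λ(n+r+1, r) = Σ_{l=r+1}^{n+r+1} (−1)^{r+1−l}·Σ_{l_1+···+l_{r+1}=l, each l_i ≥ 1} (λ^{l−r−1}/(l_1!···l_{r+1}!))·(1)_{l_1,1/λ}···(1)_{l_{r+1},1/λ}. -/

import Mathlib

open Finset PowerSeries

/-- degenerate falling factorial `(x)_{n,λ}`; `dff 1 x n` is the ordinary falling factorial. -/
noncomputable def dff (lam x : ℝ) (n : ℕ) : ℝ := ∏ i ∈ Finset.range n, (x - (i : ℝ) * lam)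

/-- `(1)_{n,1/λ} = ∏_{i<n} (1 - i/λ)`. -/
noncomputable def oneFall (lam : ℝ) (n : ℕ) : ℝ := ∏ i ∈ Finset.range n, (1 - (i : ℝ) / lam)

/-- degenerate exponential `e_λ^x(t)` as a formal power series. -/
noncomputable def degExp (lam x : ℝ) : PowerSeries ℝ :=
  PowerSeries.mk fun n => dff lam x n / n.factorial

/-- `(1+t)^y = Σ_{n≥0} (y)_n t^n/n!`. -/
noncomputable def onePlus (y : ℝ) : PowerSeries ℝ :=
  PowerSeries.mk fun n => dff 1 y n / n.factorial

/-- `(1-t)^y = Σ_{n≥0} (y)_n (-1)^n t^n/n!`. -/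
noncomputable def oneMinus (y : ℝ) : PowerSeries ℝ :=
  PowerSeries.mk fun n => dff 1 y n * (-1) ^ n / n.factorial

/-- `log_λ(1+t) = Σ_{n≥1} λ^{n-1} (1)_{n,1/λ} t^n/n!`. -/
noncomputable def degLog (lam : ℝ) : PowerSeries ℝ :=
  PowerSeries.mk fun n => if n = 0 then 0 else lam ^ (n - 1) * oneFall lam n / n.factorial

/-- `log_λ(1-t) = Σ_{n≥1} λ^{n-1} (1)_{n,1/λ} (-1)^n t^n/n!`. -/
noncomputable def degLogNeg (lam : ℝ) : PowerSeries ℝ :=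
  PowerSeries.mk fun n =>
    if n = 0 then 0 else lam ^ (n - 1) * oneFall lam n * (-1) ^ n / n.factorial

/-- composition `f(g(t))` of formal power series (the usual composition when the
constant term of `g` is zero). -/
noncomputable def pcomp (f g : PowerSeries ℝ) : PowerSeries ℝ :=
  PowerSeries.mk fun n =>
    ∑ k ∈ Finset.range (n + 1), (PowerSeries.coeff k f) * (PowerSeries.coeff n (g ^ k))

lemma negone_zpow (m k : ℕ) : ((-1 : ℝ)) ^ ((m : ℤ) - (k : ℤ)) = (-1) ^ (m + k) := by
  have h1 : ((-1:ℝ)) ^ k * (-1) ^ k = 1 := by rw [← mul_pow]; norm_num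
  rw [zpow_sub₀ (by norm_num : (-1:ℝ) ≠ 0), zpow_natCast, zpow_natCast, pow_add,
    div_eq_iff (by positivity : ((-1:ℝ))^k ≠ 0), mul_assoc, h1, mul_one]

lemma sum_tuple {M : Type*} [AddCommMonoid M] (k l : ℕ) (F : (Fin k → ℕ) → M) :
    ∑ f ∈ Finset.finsuppAntidiag (Finset.univ : Finset (Fin k)) l, F f =
      ∑ g ∈ Finset.Nat.antidiagonalTuple k l, F g := by
  apply Finset.sum_equiv Finsupp.equivFunOnFinite
  · intro f
    simp [Finset.Nat.mem_antidiagonalTuple]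
  · intro f _; rfl

lemma coeffA (lam : ℝ) (r l : ℕ) :
    (PowerSeries.coeff l ((-degLogNeg lam) ^ (r + 1))) =
      (-1 : ℝ) ^ (((r : ℤ) + 1) - (l : ℤ)) *
        ∑ f ∈ (Finset.Nat.antidiagonalTuple (r + 1) l).filter (fun f => ∀ i, 1 ≤ f i),
          lam ^ (l - (r + 1)) / (∏ i, ((f i).factorial : ℝ)) *
            ∏ i, oneFall lam (f i) := by
  have hprod : (-degLogNeg lam) ^ (r + 1) = ∏ _i : Fin (r + 1), (-degLogNeg lam) := by
    simp
  have key : (PowerSeries.coeff l) ((-degLogNeg lam) ^ (r + 1)) =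
      ∑ g ∈ Finset.Nat.antidiagonalTuple (r+1) l,
        ∏ i, (PowerSeries.coeff (g i)) (-degLogNeg lam) := by
    rw [hprod, PowerSeries.coeff_prod]
    exact sum_tuple (r+1) l (fun g => ∏ i, (PowerSeries.coeff (g i)) (-degLogNeg lam))
  rw [key, ← Finset.sum_filter_add_sum_filter_not (Finset.Nat.antidiagonalTuple (r+1) l)
      (fun f => ∀ i, 1 ≤ f i)]
  have h2 : ∑ g ∈ (Finset.Nat.antidiagonalTuple (r+1) l).filter (fun f => ¬ ∀ i, 1 ≤ f i),
      ∏ i, (PowerSeries.coeff (g i)) (-degLogNeg lam) = 0 := by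
    apply Finset.sum_eq_zero
    intro g hg
    rw [Finset.mem_filter] at hg
    obtain ⟨i, hi⟩ := not_forall.mp hg.2
    apply Finset.prod_eq_zero (Finset.mem_univ i)
    have : g i = 0 := by omega
    simp [this, degLogNeg]
  rw [h2, add_zero, Finset.mul_sum]
  apply Finset.sum_congr rfl
  intro g hg
  rw [Finset.mem_filter, Finset.Nat.mem_antidiagonalTuple] at hg
  obtain ⟨hsum, hpos⟩ := hg
  have hcoeff : ∀ i : Fin (r+1), (PowerSeries.coeff (g i)) (-degLogNeg lam) =
      ((-1 : ℝ) ^ (g i + 1)) * (lam ^ (g i - 1) * (oneFall lam (g i) * (((g i).factorial : ℝ))⁻¹)) := by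
    intro i
    have : g i ≠ 0 := by have := hpos i; omega
    simp only [map_neg, degLogNeg, PowerSeries.coeff_mk, if_neg this]
    rw [pow_succ, div_eq_mul_inv]
    ring
  rw [Finset.prod_congr rfl (fun i _ => hcoeff i), Finset.prod_mul_distrib,
    Finset.prod_mul_distrib, Finset.prod_mul_distrib,
    Finset.prod_pow_eq_pow_sum, Finset.prod_pow_eq_pow_sum]
  have e1 : ∑ i, (g i + 1) = l + (r + 1) := by
    rw [Finset.sum_add_distrib, hsum]; simp
  have e2 : ∑ i, (g i - 1) = l - (r + 1) := by
    have h : ∑ i, (g i - 1 + 1) = l := by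
      rw [← hsum]; exact Finset.sum_congr rfl (fun i _ => by have := hpos i; omega)
    rw [Finset.sum_add_distrib] at h
    simp only [Finset.sum_const, Finset.card_univ, Fintype.card_fin, smul_eq_mul, mul_one] at h
    omega
  rw [e1, e2]
  have ecast : ((r:ℤ) + 1) - (l:ℤ) = (((r+1:ℕ)):ℤ) - (l:ℤ) := by push_cast; ring
  rw [ecast, negone_zpow (r+1) l, add_comm l (r+1), Finset.prod_inv_distrib, div_eq_mul_inv]
  ring

lemma coeff_lhs (g : PowerSeries ℝ) (r m : ℕ) :
    PowerSeries.coeff m ((1 - PowerSeries.X) * PowerSeries.X ^ (r + 1) * g) =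
      (if r + 1 ≤ m then PowerSeries.coeff (m - (r+1)) g else 0) -
      (if r + 2 ≤ m then PowerSeries.coeff (m - (r+2)) g else 0) := by
  have : (1 - PowerSeries.X) * PowerSeries.X ^ (r + 1) * g =
      PowerSeries.X ^ (r+1) * g - PowerSeries.X ^ (r+2) * g := by
    ring
  rw [this, map_sub, PowerSeries.coeff_X_pow_mul', PowerSeries.coeff_X_pow_mul']

/-- Explicit expression for the generalized degenerate harmonic numbers:
`H_λ(n+r+1, r) = Σ_{l=r+1}^{n+r+1} (-1)^{r+1-l} Σ_{l₁+⋯+l_{r+1}=l, lᵢ≥1}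
  (λ^{l-r-1}/(l₁!⋯l_{r+1}!)) (1)_{l₁,1/λ} ⋯ (1)_{l_{r+1},1/λ}`. -/
theorem stmt_18 (lam : ℝ) (hlam : lam ≠ 0)
    (HG : ℕ → ℕ → ℝ)
    (hHG : ∀ r : ℕ, (1 - PowerSeries.X) * PowerSeries.X ^ (r + 1) *
      PowerSeries.mk (fun n => HG (n + r + 1) r) = (- degLogNeg lam) ^ (r + 1))
    (n r : ℕ) :
    HG (n + r + 1) r =
      ∑ l ∈ Finset.Icc (r + 1) (n + r + 1), (-1 : ℝ) ^ (((r : ℤ) + 1) - (l : ℤ)) *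
        ∑ f ∈ (Finset.Nat.antidiagonalTuple (r + 1) l).filter (fun f => ∀ i, 1 ≤ f i),
          lam ^ (l - (r + 1)) / (∏ i, ((f i).factorial : ℝ)) *
            ∏ i, oneFall lam (f i) := by
  set c : ℕ → ℝ := fun l => (-1 : ℝ) ^ (((r : ℤ) + 1) - (l : ℤ)) *
        ∑ f ∈ (Finset.Nat.antidiagonalTuple (r + 1) l).filter (fun f => ∀ i, 1 ≤ f i),
          lam ^ (l - (r + 1)) / (∏ i, ((f i).factorial : ℝ)) *
            ∏ i, oneFall lam (f i) with hc
  have key : ∀ m : ℕ,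
      (if r + 1 ≤ m then HG (m - (r+1) + r + 1) r else 0) -
      (if r + 2 ≤ m then HG (m - (r+2) + r + 1) r else 0) = c m := by
    intro m
    have := congrArg (PowerSeries.coeff m) (hHG r)
    rw [coeff_lhs, coeffA] at this
    simp only [PowerSeries.coeff_mk] at this
    exact this
  induction n with
  | zero =>
    have h0 := key (r + 1)
    simp only [le_refl, if_pos, Nat.sub_self, zero_add] at h0
    rw [if_neg (by omega)] at h0
    rw [zero_add, show Finset.Icc (r+1) (r+1) = {r+1} from Finset.Icc_self _,
      Finset.sum_singleton]
    rw [sub_zero] at h0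
    exact h0
  | succ n ih =>
    have h1 := key (n + r + 2)
    rw [if_pos (by omega), if_pos (by omega)] at h1
    have e1 : n + r + 2 - (r + 1) = n + 1 := by omega
    have e2 : n + r + 2 - (r + 2) = n := by omega
    rw [e1, e2] at h1
    have : HG (n + 1 + r + 1) r = HG (n + r + 1) r + c (n + r + 2) := by
      rw [← h1]; ring_nf
    rw [this, ih]
    rw [show n + 1 + r + 1 = (n + r + 1) + 1 by omega,
      Finset.sum_Icc_succ_top (by omega : r + 1 ≤ n + r + 1 + 1)]
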